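/- For the ℓ-house graph H_ℓ (a chain of ℓ 4-cycles sharing opposite edges, with an apex r adjacent to the two end-vertices 1,2 of the first 4-cycle plus the edge 12, and t1,t2 the two degree-2 vertices of the last 4-cycle): dist_{H_ℓ}(t1,t2) = 1, dist_{H_ℓ}(r,t1) = dist_{H_ℓ}(r,t2) = ℓ+1, and in any spanning tree T of H_ℓ with dist_T(r,v) = dist_{H_ℓ}(r,v) for all v, dist_T(t1,t2) = 2(ℓ+1). -/
import Mathlib


open SimpleGraph

/-- The ℓ-house: apex r = inl (), and pairs u_j = inr (j, false), w_j = inr (j, true)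
for 0 ≤ j ≤ ℓ, with edges r u_0, r w_0, u_j w_j for all j, and the ladder edges
u_{j-1} u_j, w_{j-1} w_j. The terminals are t1 = u_ℓ and t2 = w_ℓ. -/
def houseLRel (l : ℕ) :
    (Unit ⊕ Fin (l + 1) × Bool) → (Unit ⊕ Fin (l + 1) × Bool) → Prop
  | .inl _, .inr (j, _) => (j : ℕ) = 0
  | .inr (j, s), .inr (j', s') =>
      (j = j' ∧ s ≠ s') ∨ (s = s' ∧ (j : ℕ) + 1 = (j' : ℕ))
  | _, _ => False

def houseL (l : ℕ) : SimpleGraph (Unit ⊕ Fin (l + 1) × Bool) :=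
  SimpleGraph.fromRel (houseLRel l)

/-- Potential lower bound on walk lengths. -/
lemma potential_walk {V : Type*} {G : SimpleGraph V} (φ : V → ℤ)
    (hφ : ∀ x y, G.Adj x y → |φ x - φ y| ≤ 1) :
    ∀ {x y : V} (p : G.Walk x y), |φ x - φ y| ≤ p.length := by
  intro x y p
  induction p with
  | nil => simp
  | cons h p ih =>
    rename_i a b c
    calc |φ a - φ c| = |(φ a - φ b) + (φ b - φ c)| := by ring_nf
      _ ≤ |φ a - φ b| + |φ b - φ c| := abs_add_le _ _
      _ ≤ 1 + _ := by exact add_le_add (hφ _ _ h) ih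
      _ = _ := by push_cast [SimpleGraph.Walk.length_cons]; ring

/-- In an acyclic connected graph, adjacent vertices have different distances
from any root. -/
lemma acyclic_adj_dist_ne {V : Type*} {G : SimpleGraph V} (hc : G.Connected)
    (ha : G.IsAcyclic) {r x y : V} (h : G.Adj x y) :
    G.dist r x ≠ G.dist r y := by
  classical
  intro hd
  obtain ⟨p, hp, hpl⟩ := hc.exists_path_of_dist r x
  obtain ⟨q, hq, hql⟩ := hc.exists_path_of_dist r y
  have hyns : y ∉ p.support := by
    intro hy
    have hsplit := SimpleGraph.Walk.take_spec p hy
    have hlen : (p.takeUntil y hy).length + (p.dropUntil y hy).length = p.length := by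
      rw [← SimpleGraph.Walk.length_append, hsplit]
    have h1 : G.dist r y ≤ (p.takeUntil y hy).length := SimpleGraph.dist_le _
    have h2 : (p.dropUntil y hy).length ≠ 0 := by
      intro h0
      have := (p.dropUntil y hy).eq_of_length_eq_zero h0
      exact h.ne' this
    omega
  have hpath1 : (SimpleGraph.Walk.cons h.symm p.reverse).IsPath :=
    hp.reverse.cons (by simpa using hyns)
  have hpath2 : q.reverse.IsPath := hq.reverse
  have huniq := ha.path_unique ⟨_, hpath1⟩ ⟨_, hpath2⟩
  have hval : (SimpleGraph.Walk.cons h.symm p.reverse) = q.reverse :=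
    congrArg Subtype.val huniq
  have hle := congrArg SimpleGraph.Walk.length hval
  simp only [SimpleGraph.Walk.length_cons, SimpleGraph.Walk.length_reverse] at hle
  omega

private def housePhi (l : ℕ) : (Unit ⊕ Fin (l + 1) × Bool) → ℤ
  | .inl _ => 0
  | .inr (j, _) => (j : ℤ) + 1

private def housePsi (l : ℕ) : (Unit ⊕ Fin (l + 1) × Bool) → ℤ
  | .inl _ => 0
  | .inr (j, s) => if s then -((j : ℤ) + 1) else (j : ℤ) + 1

lemma house_adj_rung (l : ℕ) (j : Fin (l + 1)) (s : Bool) :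
    (houseL l).Adj (.inr (j, s)) (.inr (j, !s)) := by
  rw [houseL, SimpleGraph.fromRel_adj]
  refine ⟨by simp, Or.inl (Or.inl ⟨rfl, by simp⟩)⟩

lemma house_adj_base (l : ℕ) (s : Bool) (h : 0 < l + 1) :
    (houseL l).Adj (.inl ()) (.inr (⟨0, h⟩, s)) := by
  rw [houseL, SimpleGraph.fromRel_adj]
  exact ⟨by simp, Or.inl rfl⟩

lemma house_adj_ladder (l : ℕ) (j : ℕ) (h1 : j < l + 1) (h2 : j + 1 < l + 1) (s : Bool) :
    (houseL l).Adj (.inr (⟨j, h1⟩, s)) (.inr (⟨j + 1, h2⟩, s)) := by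
  rw [houseL, SimpleGraph.fromRel_adj]
  refine ⟨by simp [Fin.ext_iff], Or.inl (Or.inr ⟨rfl, rfl⟩)⟩

lemma house_phi_adj (l : ℕ) : ∀ x y, (houseL l).Adj x y →
    |housePhi l x - housePhi l y| ≤ 1 := by
  intro x y h
  rw [houseL, SimpleGraph.fromRel_adj] at h
  obtain ⟨hne, hrel | hrel⟩ : _ := h <;>
  · rcases x with _ | ⟨j, s⟩ <;> rcases y with _ | ⟨j', s'⟩ <;>
      simp only [houseLRel] at hrel <;> simp_all [housePhi] <;>
      rcases hrel with ⟨h1, h2⟩ | ⟨h1, h2⟩ <;> simp_all <;>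
      · have : ((j' : ℕ) : ℤ) = (j : ℕ) + 1 ∨ ((j : ℕ) : ℤ) = (j' : ℕ) + 1 := by
          omega
        rw [abs_le]; omega

lemma house_walk (l : ℕ) : ∀ (j : ℕ) (hj : j < l + 1) (s : Bool),
    ∃ p : (houseL l).Walk (.inl ()) (.inr (⟨j, hj⟩, s)), p.length = j + 1 := by
  intro j
  induction j with
  | zero =>
    intro hj s
    exact ⟨SimpleGraph.Walk.cons (house_adj_base l s hj) SimpleGraph.Walk.nil, rfl⟩
  | succ k ih =>
    intro hj s
    obtain ⟨p, hp⟩ := ih (by omega) s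
    exact ⟨p.concat (house_adj_ladder l k (by omega) hj s),
      by rw [SimpleGraph.Walk.length_concat, hp]⟩

lemma house_dist (l : ℕ) (j : Fin (l + 1)) (s : Bool) :
    (houseL l).dist (.inl ()) (.inr (j, s)) = (j : ℕ) + 1 := by
  rcases j with ⟨j, hj⟩
  obtain ⟨p, hp⟩ := house_walk l j hj s
  apply le_antisymm
  · calc (houseL l).dist _ _ ≤ p.length := SimpleGraph.dist_le p
      _ = _ := hp
  · obtain ⟨q, hq⟩ := SimpleGraph.Reachable.exists_walk_length_eq_dist ⟨p⟩
    have hpw := potential_walk (housePhi l) (house_phi_adj l) q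
    simp only [housePhi, hq, Fin.val_mk] at hpw
    have h2 : |(0 : ℤ) - ((j : ℤ) + 1)| = (j : ℤ) + 1 := by
      rw [abs_sub_comm]; simp; positivity
    rw [h2] at hpw
    exact_mod_cast hpw

/-- In the ℓ-house: dist(t1,t2) = 1, dist(r,t1) = dist(r,t2) = ℓ+1, and every
spanning tree preserving all distances from r has dist(t1,t2) = 2(ℓ+1). -/
theorem stmt18 :
    ∀ l : ℕ, 1 ≤ l →
      (houseL l).dist (.inr (Fin.last l, false)) (.inr (Fin.last l, true)) = 1 ∧
      (houseL l).dist (.inl ()) (.inr (Fin.last l, false)) = l + 1 ∧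
      (houseL l).dist (.inl ()) (.inr (Fin.last l, true)) = l + 1 ∧
      ∀ T : SimpleGraph (Unit ⊕ Fin (l + 1) × Bool),
        T ≤ houseL l → T.Connected → T.IsAcyclic →
        (∀ v, T.dist (.inl ()) v = (houseL l).dist (.inl ()) v) →
        T.dist (.inr (Fin.last l, false)) (.inr (Fin.last l, true)) = 2 * (l + 1) := by
  intro l _
  have hlast : ((Fin.last l : Fin (l + 1)) : ℕ) = l := rfl
  refine ⟨?_, ?_, ?_, ?_⟩
  · rw [SimpleGraph.dist_eq_one_iff_adj]
    simpa using house_adj_rung l (Fin.last l) false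
  · rw [house_dist l (Fin.last l) false, hlast]
  · rw [house_dist l (Fin.last l) true, hlast]
  · intro T hle hTc hTa hpres
    -- T has no rung edges, so ψ changes by at most 1 along T-edges
    have hpsi : ∀ x y, T.Adj x y → |housePsi l x - housePsi l y| ≤ 1 := by
      intro x y h
      have hH := hle h
      rw [houseL, SimpleGraph.fromRel_adj] at hH
      obtain ⟨hne, hrel⟩ := hH
      rcases x with _ | ⟨j, s⟩ <;> rcases y with _ | ⟨j', s'⟩
      · simp [houseLRel] at hrel
      · simp only [houseLRel, or_false] at hrel
        have hc : (((j' : ℕ)) : ℤ) = 0 := by exact_mod_cast hrel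
        simp only [housePsi]
        rcases s' <;> simp only [if_true, if_false, Bool.false_eq_true] <;>
          rw [abs_le] <;> omega
      · simp only [houseLRel, false_or] at hrel
        have hc : (((j : ℕ)) : ℤ) = 0 := by exact_mod_cast hrel
        simp only [housePsi]
        rcases s <;> simp only [if_true, if_false, Bool.false_eq_true] <;>
          rw [abs_le] <;> omega
      · have hrung : j = j' → s ≠ s' → False := by
          intro hj hs
          apply acyclic_adj_dist_ne hTc hTa h
          rw [hpres, hpres, house_dist, house_dist, hj]
        simp only [houseLRel] at hrel
        rcases hrel with (⟨h1, h2⟩ | ⟨h1, h2⟩) | (⟨h1, h2⟩ | ⟨h1, h2⟩)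
        · exact (hrung h1 h2).elim
        · subst h1
          have hc : (((j' : ℕ)) : ℤ) = ((j : ℕ) : ℤ) + 1 := by exact_mod_cast h2.symm
          simp only [housePsi]
          rcases s <;> simp only [if_true, if_false, Bool.false_eq_true] <;>
            rw [abs_le] <;> omega
        · exact (hrung h1.symm (Ne.symm h2)).elim
        · subst h1
          have hc : (((j : ℕ)) : ℤ) = ((j' : ℕ) : ℤ) + 1 := by exact_mod_cast h2.symm
          simp only [housePsi]
          rcases s' <;> simp only [if_true, if_false, Bool.false_eq_true] <;>
            rw [abs_le] <;> omega
    have hvals : ∀ s : Bool, T.dist (.inl ()) (.inr (Fin.last l, s)) = l + 1 := by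
      intro s
      rw [hpres, house_dist, hlast]
    apply le_antisymm
    · calc T.dist (.inr (Fin.last l, false)) (.inr (Fin.last l, true))
          ≤ T.dist (.inr (Fin.last l, false)) (.inl ())
            + T.dist (.inl ()) (.inr (Fin.last l, true)) := hTc.dist_triangle
        _ = 2 * (l + 1) := by
            rw [SimpleGraph.dist_comm, hvals, hvals]; ring
    · obtain ⟨q, hq⟩ := hTc.exists_walk_length_eq_dist
        (Sum.inr (Fin.last l, false)) (Sum.inr (Fin.last l, true))
      have hpw := potential_walk (housePsi l) hpsi q
      simp only [housePsi, hlast, hq, if_true, if_false, Bool.false_eq_true] at hpw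
      have h4 : ((l : ℤ) + 1) - (-((l : ℤ) + 1)) ≤
          (T.dist (.inr (Fin.last l, false)) (.inr (Fin.last l, true)) : ℤ) :=
        le_trans (le_abs_self _) hpw
      omega
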